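/- For a Dirichlet distribution Dir(α) on the K-simplex, the expected pairwise KL divergence between two independently sampled categorical distributions equals (K−1)/S, where S = Σ_i α_i. -/

import Mathlib

open Finset

/-- The digamma function `ψ = (log ∘ Γ)'`. -/
noncomputable def digamma (x : ℝ) : ℝ :=
  deriv (fun y => Real.log (Real.Gamma y)) x

lemma logGamma_diff {x : ℝ} (hx : 0 < x) :
    DifferentiableAt ℝ (fun y => Real.log (Real.Gamma y)) x := by
  refine (Real.differentiableAt_Gamma fun m => ?_).log (Real.Gamma_pos_of_pos hx).ne'
  intro h; have : (0:ℝ) < -(m:ℝ) := h ▸ hx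
  simp at this; linarith [this]

lemma digamma_add_one {x : ℝ} (hx : 0 < x) :
    digamma (x + 1) = digamma x + 1 / x := by
  unfold digamma
  have h1 : deriv (fun y => Real.log (Real.Gamma (y + 1))) x
      = deriv (fun y => Real.log (Real.Gamma y)) (x + 1) :=
    deriv_comp_add_const (fun y => Real.log (Real.Gamma y)) 1 x
  rw [← h1]
  have hev : (fun y => Real.log (Real.Gamma (y + 1)))
      =ᶠ[nhds x] fun y => Real.log y + Real.log (Real.Gamma y) := by
    filter_upwards [eventually_gt_nhds hx] with y hy
    rw [Real.Gamma_add_one hy.ne', Real.log_mul hy.ne'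
      (Real.Gamma_pos_of_pos hy).ne']
  rw [hev.deriv_eq, deriv_fun_add (Real.differentiableAt_log hx.ne') (logGamma_diff hx),
    Real.deriv_log, one_div]
  ring

theorem expected_pairwise_KL_dirichlet {K : ℕ} (hK : 2 ≤ K)
    (α : Fin K → ℝ) (hα : ∀ i, 0 < α i) (S : ℝ) (hS : S = ∑ i, α i) :
    -(∑ i, (α i / S) * (digamma (α i) - digamma S)) +
      ∑ i, (α i / S) * (digamma (α i + 1) - digamma (S + 1)) =
      ((K : ℝ) - 1) / S := by
  have hSpos : 0 < S := by
    rw [hS]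
    exact Finset.sum_pos (fun i _ => hα i) ⟨⟨0, by omega⟩, mem_univ _⟩
  have key : ∀ i, digamma (α i + 1) = digamma (α i) + 1 / α i :=
    fun i => digamma_add_one (hα i)
  have keyS : digamma (S + 1) = digamma S + 1 / S := digamma_add_one hSpos
  rw [← Finset.sum_neg_distrib, ← Finset.sum_add_distrib]
  have : ∀ i ∈ univ, -((α i / S) * (digamma (α i) - digamma S)) +
      (α i / S) * (digamma (α i + 1) - digamma (S + 1)) = 1 / S - α i / S ^ 2 := by
    intro i _
    have h1 := (hα i).ne'
    have h2 := hSpos.ne'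
    rw [key i, keyS]
    field_simp
    ring
  rw [Finset.sum_congr rfl this, Finset.sum_sub_distrib, Finset.sum_const,
    ← Finset.sum_div, ← hS]
  simp only [card_univ, Fintype.card_fin, nsmul_eq_mul]
  field_simp
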